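/- For a regular consumption process X with relative rates Z (Z_k = X_k/A_k where A_k > 0), one has ∏_{i=0}^{k}(1 - Z_i) = 1 - Σ_{i=0}^{k} X_i/S_i for all k ∈ ℕ. -/

import Mathlib

open MeasureTheory Finset

/-- for a regular consumption process with relative rates `Z`
(`X_k = Z_k·A_k`), one has `∏_{i=0}^k (1-Z_i) = 1 - ∑_{i=0}^k X_i/S_i`. -/
theorem product_sum_identity
    {Ω : Type*} {m : MeasurableSpace Ω} (ℱ : Filtration ℝ m)
    (S A : ℝ → Ω → ℝ) (X : ℕ → Ω → ℝ) (Z : ℕ → Ω → ℝ)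
    (hSadapted : Adapted ℱ S)
    (hSpos : ∀ t ω, 0 < S t ω)
    (hA0 : ∀ ω, A 0 ω = S 0 ω)
    (hArec : ∀ (k : ℕ) (t : ℝ), (k : ℝ) < t → t ≤ (k : ℝ) + 1 → ∀ ω,
      A t ω = (A (k : ℝ) ω - X k ω) * S t ω / S (k : ℝ) ω)
    (hreg : ∀ (k : ℕ) (ω : Ω), 0 ≤ X k ω ∧ X k ω ≤ A (k : ℝ) ω)
    (hX : ∀ (k : ℕ) (ω : Ω), X k ω = Z k ω * A (k : ℝ) ω) :
    ∀ (k : ℕ) (ω : Ω),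
      ∏ i ∈ range (k + 1), (1 - Z i ω) =
        1 - ∑ i ∈ range (k + 1), X i ω / S (i : ℝ) ω := by
  intro k ω
  suffices h : ∀ n : ℕ, (∏ i ∈ range n, (1 - Z i ω)) =
      1 - ∑ i ∈ range n, X i ω / S (i : ℝ) ω ∧
      A (n : ℝ) ω = S (n : ℝ) ω * ∏ i ∈ range n, (1 - Z i ω) by
    exact (h (k + 1)).1
  intro n
  induction n with
  | zero => simp [hA0 ω]
  | succ n ih =>
    obtain ⟨hprod, hA⟩ := ih
    have hS : S (n : ℝ) ω ≠ 0 := (hSpos _ ω).ne'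
    have hrec := hArec n ((n : ℝ) + 1) (by linarith) le_rfl ω
    have hXn : X n ω / S (n : ℝ) ω =
        Z n ω * (1 - ∑ i ∈ range n, X i ω / S (i : ℝ) ω) := by
      rw [hX n ω, hA, hprod]
      field_simp
    constructor
    · rw [prod_range_succ, sum_range_succ, hprod, hXn]; ring
    · have hcast : ((n + 1 : ℕ) : ℝ) = (n : ℝ) + 1 := by push_cast; ring
      rw [hcast, hrec, hX n ω, hA, prod_range_succ]
      field_simp
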